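/- Let x = 6p + q with p ≥ 1 and 0 ≤ q ≤ 5, and suppose n ≥ 2^{3p+2}·p² + p + 1. Let 𝓕 ⊆ 2^[n] satisfy d̄(A,B,C) ≤ x for all A, B, C ∈ 𝓕. If there exist A, B ∈ 𝓕 with d̄(A,B) := 2g₁ + 3g₂ > 4p + q (g_m counts elements in exactly m of {A,B}), then |𝓕| < Σ_{i=0}^{p} C(n,i); in particular 𝓕 is not of maximum size in this class. -/

import Mathlib

def fm (n m : ℕ) (A B C : Finset ℕ) : ℕ :=
  ((Finset.Icc 1 n).filter (fun x =>
    (if x ∈ A then 1 else 0) + (if x ∈ B then 1 else 0) + (if x ∈ C then 1 else 0) = m)).card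

def dbar (n : ℕ) (A B C : Finset ℕ) : ℕ :=
  2 * fm n 1 A B C + 3 * fm n 2 A B C + 3 * fm n 3 A B C

def gm (n m : ℕ) (A B : Finset ℕ) : ℕ :=
  ((Finset.Icc 1 n).filter (fun x =>
    (if x ∈ A then 1 else 0) + (if x ∈ B then 1 else 0) = m)).card

def dbar2 (n : ℕ) (A B : Finset ℕ) : ℕ := 2 * gm n 1 A B + 3 * gm n 2 A B

open Finset

-- key pointwise inequality
lemma pw16 (A B C : Finset ℕ) (x : ℕ) :
    2 * (if ((if x ∈ A then 1 else 0) + (if x ∈ B then 1 else 0) : ℕ) = 1 then 1 else 0)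
      + 3 * (if ((if x ∈ A then 1 else 0) + (if x ∈ B then 1 else 0) : ℕ) = 2 then 1 else 0)
      + 2 * (if x ∈ C \ (A ∪ B) then 1 else 0)
    ≤ 2 * (if ((if x ∈ A then 1 else 0) + (if x ∈ B then 1 else 0) + (if x ∈ C then 1 else 0) : ℕ) = 1 then 1 else 0)
      + 3 * (if ((if x ∈ A then 1 else 0) + (if x ∈ B then 1 else 0) + (if x ∈ C then 1 else 0) : ℕ) = 2 then 1 else 0)
      + 3 * (if ((if x ∈ A then 1 else 0) + (if x ∈ B then 1 else 0) + (if x ∈ C then 1 else 0) : ℕ) = 3 then 1 else 0) := by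
  by_cases hA : x ∈ A <;> by_cases hB : x ∈ B <;> by_cases hC : x ∈ C <;>
    simp [hA, hB, hC]

lemma key16 (n : ℕ) (A B C : Finset ℕ) (hC : C ⊆ Finset.Icc 1 n) :
    dbar2 n A B + 2 * (C \ (A ∪ B)).card ≤ dbar n A B C := by
  have hsub : C \ (A ∪ B) ⊆ Finset.Icc 1 n := (sdiff_subset).trans hC
  have hc : (C \ (A ∪ B)).card = ∑ x ∈ Finset.Icc 1 n, (if x ∈ C \ (A ∪ B) then 1 else 0) := by
    rw [← Finset.card_filter, Finset.filter_mem_eq_inter, Finset.inter_eq_right.mpr hsub]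
  rw [dbar, dbar2, fm, fm, fm, gm, gm, Finset.card_filter, Finset.card_filter,
    Finset.card_filter, Finset.card_filter, Finset.card_filter, hc,
]
  simp only [Finset.mul_sum]
  simp only [← Finset.sum_add_distrib]
  exact Finset.sum_le_sum fun x _ => pw16 A B C x

-- filter identities
lemma gm1_eq (n : ℕ) (A B : Finset ℕ) (hA : A ⊆ Finset.Icc 1 n) (hB : B ⊆ Finset.Icc 1 n) :
    gm n 1 A B = (A \ B).card + (B \ A).card := by
  rw [gm, ← Finset.card_union_of_disjoint (disjoint_sdiff_sdiff)]
  congr 1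
  ext x
  simp only [Finset.mem_filter, Finset.mem_union, Finset.mem_sdiff]
  constructor
  · rintro ⟨hx, h⟩
    by_cases hA' : x ∈ A <;> by_cases hB' : x ∈ B <;> simp [hA', hB'] at h ⊢
  · rintro (⟨h1, h2⟩ | ⟨h1, h2⟩)
    · exact ⟨hA h1, by simp [h1, h2]⟩
    · exact ⟨hB h1, by simp [h1, h2]⟩

lemma gm2_eq (n : ℕ) (A B : Finset ℕ) (hA : A ⊆ Finset.Icc 1 n) :
    gm n 2 A B = (A ∩ B).card := by
  rw [gm]
  congr 1
  ext x
  simp only [Finset.mem_filter, Finset.mem_inter]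
  constructor
  · rintro ⟨hx, h⟩
    by_cases hA' : x ∈ A <;> by_cases hB' : x ∈ B <;> simp [hA', hB'] at h ⊢
  · rintro ⟨h1, h2⟩
    exact ⟨hA h1, by simp [h1, h2]⟩

lemma dbarABB (n : ℕ) (A B : Finset ℕ) (hA : A ⊆ Finset.Icc 1 n) (hB : B ⊆ Finset.Icc 1 n) :
    dbar n A B B = 2 * (A \ B).card + 3 * (B \ A).card + 3 * (A ∩ B).card := by
  have h1 : fm n 1 A B B = (A \ B).card := by
    rw [fm]; congr 1; ext x
    simp only [Finset.mem_filter, Finset.mem_sdiff]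
    constructor
    · rintro ⟨hx, h⟩
      by_cases hA' : x ∈ A <;> by_cases hB' : x ∈ B <;> simp [hA', hB'] at h ⊢
    · rintro ⟨h1, h2⟩; exact ⟨hA h1, by simp [h1, h2]⟩
  have h2 : fm n 2 A B B = (B \ A).card := by
    rw [fm]; congr 1; ext x
    simp only [Finset.mem_filter, Finset.mem_sdiff]
    constructor
    · rintro ⟨hx, h⟩
      by_cases hA' : x ∈ A <;> by_cases hB' : x ∈ B <;> simp [hA', hB'] at h ⊢
    · rintro ⟨h1, h2⟩; exact ⟨hB h1, by simp [h1, h2]⟩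
  have h3 : fm n 3 A B B = (A ∩ B).card := by
    rw [fm]; congr 1; ext x
    simp only [Finset.mem_filter, Finset.mem_inter]
    constructor
    · rintro ⟨hx, h⟩
      by_cases hA' : x ∈ A <;> by_cases hB' : x ∈ B <;> simp [hA', hB'] at h ⊢
    · rintro ⟨h1, h2⟩; exact ⟨hA h1, by simp [h1, h2]⟩
  rw [dbar, h1, h2, h3]

lemma dbarABA (n : ℕ) (A B : Finset ℕ) (hA : A ⊆ Finset.Icc 1 n) (hB : B ⊆ Finset.Icc 1 n) :
    dbar n A B A = 2 * (B \ A).card + 3 * (A \ B).card + 3 * (A ∩ B).card := by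
  have h1 : fm n 1 A B A = (B \ A).card := by
    rw [fm]; congr 1; ext x
    simp only [Finset.mem_filter, Finset.mem_sdiff]
    constructor
    · rintro ⟨hx, h⟩
      by_cases hA' : x ∈ A <;> by_cases hB' : x ∈ B <;> simp [hA', hB'] at h ⊢
    · rintro ⟨h1, h2⟩; exact ⟨hB h1, by simp [h1, h2]⟩
  have h2 : fm n 2 A B A = (A \ B).card := by
    rw [fm]; congr 1; ext x
    simp only [Finset.mem_filter, Finset.mem_sdiff]
    constructor
    · rintro ⟨hx, h⟩
      by_cases hA' : x ∈ A <;> by_cases hB' : x ∈ B <;> simp [hA', hB'] at h ⊢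
    · rintro ⟨h1, h2⟩; exact ⟨hA h1, by simp [h1, h2]⟩
  have h3 : fm n 3 A B A = (A ∩ B).card := by
    rw [fm]; congr 1; ext x
    simp only [Finset.mem_filter, Finset.mem_inter]
    constructor
    · rintro ⟨hx, h⟩
      by_cases hA' : x ∈ A <;> by_cases hB' : x ∈ B <;> simp [hA', hB'] at h ⊢
    · rintro ⟨h1, h2⟩; exact ⟨hA h1, by simp [h1, h2]⟩
  rw [dbar, h1, h2, h3]

-- monotonicity of choose up to half
lemma choose_mono_half (n i k : ℕ) (hik : i ≤ k) (hk : k ≤ n / 2) :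
    n.choose i ≤ n.choose k := by
  induction k with
  | zero => simp_all
  | succ k ih =>
    rcases Nat.lt_or_ge i (k+1) with h | h
    · exact le_trans (ih (by omega) (by omega)) (Nat.choose_le_succ_of_lt_half_left (by omega))
    · have : i = k + 1 := by omega
      simp [this]

theorem stmt16 (n p q x : ℕ) (hp : 1 ≤ p) (hq : q ≤ 5) (hx : x = 6 * p + q)
    (hn : 2 ^ (3 * p + 2) * p ^ 2 + p + 1 ≤ n)
    (𝓕 : Finset (Finset ℕ)) (h𝓕 : ∀ F ∈ 𝓕, F ⊆ Finset.Icc 1 n)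
    (hd : ∀ A ∈ 𝓕, ∀ B ∈ 𝓕, ∀ C ∈ 𝓕, dbar n A B C ≤ x)
    (hAB : ∃ A ∈ 𝓕, ∃ B ∈ 𝓕, 4 * p + q < dbar2 n A B) :
    𝓕.card < ∑ i ∈ Finset.range (p + 1), n.choose i := by
  obtain ⟨A, hAF, B, hBF, hABd⟩ := hAB
  have hA : A ⊆ Finset.Icc 1 n := h𝓕 A hAF
  have hB : B ⊆ Finset.Icc 1 n := h𝓕 B hBF
  set a := (A \ B).card with ha
  set b := (B \ A).card with hb
  set c := (A ∩ B).card with hc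
  -- numeric constraints
  have h1 : 2 * a + 3 * b + 3 * c ≤ x := by
    rw [← dbarABB n A B hA hB]; exact hd A hAF B hBF B hBF
  have h2 : 2 * b + 3 * a + 3 * c ≤ x := by
    rw [← dbarABA n A B hA hB]; exact hd A hAF B hBF A hAF
  have h3 : 4 * p + q < 2 * (a + b) + 3 * c := by
    have := hABd
    rwa [dbar2, gm1_eq n A B hA hB, gm2_eq n A B hA, ← ha, ← hb, ← hc,
      show 2 * (a + b) + 3 * c = 2 * (a + b) + 3 * c from rfl] at this
  -- |A ∪ B| = a + b + c
  have hu : (A ∪ B).card = a + b + c := by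
    have e1 : (A \ B).card + (A ∩ B).card = A.card := Finset.card_sdiff_add_card_inter A B
    have e2 : (B \ A).card + (B ∩ A).card = B.card := Finset.card_sdiff_add_card_inter B A
    have e3 : (A ∪ B).card + (A ∩ B).card = A.card + B.card := Finset.card_union_add_card_inter A B
    have e4 : (B ∩ A).card = c := by rw [Finset.inter_comm]
    omega
  have hu2 : (A ∪ B).card ≤ 3 * p + 1 := by omega
  -- every C ∈ 𝓕 has small part outside A ∪ B
  have hout : ∀ C ∈ 𝓕, (C \ (A ∪ B)).card < p := by
    intro C hCF
    have hk := key16 n A B C (h𝓕 C hCF)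
    have hdc := hd A hAF B hBF C hCF
    have hd2 : 4 * p + q < dbar2 n A B := hABd
    omega
  -- counting
  set T := (Finset.range p).biUnion (fun i => (Finset.Icc 1 n).powersetCard i) with hT
  have hinj : 𝓕.card ≤ ((A ∪ B).powerset ×ˢ T).card := by
    apply Finset.card_le_card_of_injOn (fun C => (C ∩ (A ∪ B), C \ (A ∪ B)))
    · intro C hCF
      simp only [Finset.mem_coe, Finset.mem_product, Finset.mem_powerset, Finset.mem_biUnion, hT]
      refine ⟨Finset.inter_subset_right, (C \ (A ∪ B)).card, ?_, ?_⟩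
      · exact Finset.mem_range.mpr (hout C hCF)
      · exact Finset.mem_powersetCard.mpr ⟨(sdiff_subset).trans (h𝓕 C hCF), rfl⟩
    · intro C1 hC1 C2 hC2 he
      simp only [Prod.mk.injEq] at he
      calc C1 = C1 \ (A ∪ B) ∪ C1 ∩ (A ∪ B) := (Finset.sdiff_union_inter C1 (A ∪ B)).symm
        _ = C2 \ (A ∪ B) ∪ C2 ∩ (A ∪ B) := by rw [he.1, he.2]
        _ = C2 := Finset.sdiff_union_inter C2 (A ∪ B)
  -- cardinality of the target
  have hTcard : T.card = ∑ i ∈ Finset.range p, n.choose i := by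
    rw [hT, Finset.card_biUnion]
    · refine Finset.sum_congr rfl fun i _ => ?_
      rw [Finset.card_powersetCard, Nat.card_Icc]
      norm_num
    · intro i _ j _ hij
      simp only [Finset.disjoint_left]
      intro s hs1 hs2
      rw [Finset.mem_powersetCard] at hs1 hs2
      exact hij (hs1.2.symm.trans hs2.2)
  have hPcard : ((A ∪ B).powerset ×ˢ T).card = 2 ^ (A ∪ B).card * T.card := by
    rw [Finset.card_product, Finset.card_powerset]
  -- put things together
  set r := p - 1 with hrdef
  have hr : p = r + 1 := by omega
  have h2p : 2 * p ≤ n := by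
    have e1 : p ≤ p ^ 2 := Nat.le_self_pow (by norm_num) p
    have e2 : 4 ≤ 2 ^ (3 * p + 2) := by
      calc (4:ℕ) = 2 ^ 2 := by norm_num
        _ ≤ 2 ^ (3 * p + 2) := Nat.pow_le_pow_right (by norm_num) (by omega)
    have e3 : 4 * p ≤ 2 ^ (3 * p + 2) * p ^ 2 := Nat.mul_le_mul e2 e1
    omega
  have hTle : T.card ≤ p * n.choose r := by
    rw [hTcard]
    calc ∑ i ∈ Finset.range p, n.choose i ≤ ∑ _i ∈ Finset.range p, n.choose r :=
          Finset.sum_le_sum fun i hi => choose_mono_half n i r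
            (by simp at hi; omega) (by omega)
      _ = p * n.choose r := by rw [Finset.sum_const, Finset.card_range, smul_eq_mul]
  have hpow : 2 ^ (A ∪ B).card ≤ 2 ^ (3 * p + 1) := Nat.pow_le_pow_right (by norm_num) hu2
  have hchoose : n.choose p * p = n.choose r * (n - r) := by
    rw [hr]; exact Nat.choose_succ_right_eq n r
  have hcpos : 0 < n.choose r := Nat.choose_pos (by omega)
  have hEbig : 2 ^ (3 * p + 1) * p ^ 2 < n - r := by
    have hkey : 2 ^ (3 * p + 2) * p ^ 2 = 2 * (2 ^ (3 * p + 1) * p ^ 2) := by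
      rw [pow_succ]; ring
    have hEp : 1 ≤ 2 ^ (3 * p + 1) * p ^ 2 :=
      Nat.one_le_iff_ne_zero.mpr (Nat.mul_ne_zero (by positivity) (by positivity))
    omega
  have hmain : 𝓕.card * p < n.choose p * p := by
    calc 𝓕.card * p ≤ (2 ^ (A ∪ B).card * T.card) * p := by
          apply Nat.mul_le_mul_right
          exact hinj.trans (le_of_eq hPcard)
      _ ≤ (2 ^ (3 * p + 1) * (p * n.choose r)) * p :=
          Nat.mul_le_mul_right _ (Nat.mul_le_mul hpow hTle)
      _ = (2 ^ (3 * p + 1) * p ^ 2) * n.choose r := by ring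
      _ < (n - r) * n.choose r := by
          exact Nat.mul_lt_mul_of_lt_of_le hEbig (le_refl _) hcpos
      _ = n.choose p * p := by rw [hchoose]; ring
  have hlt : 𝓕.card < n.choose p := by
    have := Nat.lt_of_mul_lt_mul_right (a := p) hmain
    exact this
  calc 𝓕.card < n.choose p := hlt
    _ ≤ ∑ i ∈ Finset.range (p + 1), n.choose i :=
        Finset.single_le_sum (fun i _ => Nat.zero_le _) (Finset.self_mem_range_succ p)
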